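/- Let q ∈ [1,∞], K ≥ 2, n₁,…,n_K > 0, λ₁, λ₂ ≥ 0, let S¹,…,Sᴷ be symmetric p×p real matrices, let (I₁,…,I_L) be a partition of {1,…,p}, and let T = ∪_{l=1}^L I_l × I_l. If n_k|Sᵏ_{ij}| ≤ λ₁ for all (i,j) ∈ T^c and all k = 1,…,K, then every K-tuple (Θ̂¹,…,Θ̂ᴷ) of symmetric positive definite p×p matrices minimizing the PNJGL objective F(Θ¹,…,Θᴷ) = Σ_{k=1}^K n_k(−log det Θᵏ + trace(SᵏΘᵏ)) + λ₁ Σ_{k=1}^K Σ_{i,j}|Θᵏ_{ij}| + λ₂ Σ_{k<k'} Ω_q(Θᵏ − Θᵏ') over all K-tuples of symmetric positive definite matrices has the property that each Θ̂ᵏ is supported on T. -/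

import Mathlib

open Matrix
open scoped ENNReal BigOperators

/-- The ℓ_q norm of a finitely-indexed real vector, for q ∈ [0,∞]
(the maximum absolute entry when q = ∞). -/
noncomputable def lqNorm (q : ℝ≥0∞) {ι : Type*} [Fintype ι] (x : ι → ℝ) : ℝ :=
  ‖(WithLp.equiv q (ι → ℝ)).symm x‖

/-- The row-column overlap norm Ω_q of a K-tuple of p×p real matrices:
the infimum of Σ_j ‖([V¹;…;Vᴷ])_j‖_q over all decompositions Θᵏ = Vᵏ + (Vᵏ)ᵀ. -/
noncomputable def rcon (q : ℝ≥0∞) (K p : ℕ)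
    (Θ : Fin K → Matrix (Fin p) (Fin p) ℝ) : ℝ :=
  sInf { r : ℝ | ∃ V : Fin K → Matrix (Fin p) (Fin p) ℝ,
    (∀ k, Θ k = V k + (V k)ᵀ) ∧
    r = ∑ j : Fin p, lqNorm q (fun ki : Fin K × Fin p => V ki.1 ki.2 j) }

/-- The row-column overlap norm Ω_q of a single p×p matrix (the case K = 1). -/
noncomputable def rcon1 (q : ℝ≥0∞) {p : ℕ} (Θ : Matrix (Fin p) (Fin p) ℝ) : ℝ :=
  sInf { r : ℝ | ∃ V : Matrix (Fin p) (Fin p) ℝ,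
    Θ = V + Vᵀ ∧ r = ∑ j : Fin p, lqNorm q (fun i => V i j) }

/-- The PNJGL objective for K precision matrices:
Σ_k n_k(−log det Θᵏ + trace(SᵏΘᵏ)) + λ₁ Σ_k Σ_{i,j}|Θᵏ_{ij}|
  + λ₂ Σ_{k<k'} Ω_q(Θᵏ − Θᵏ'). -/
noncomputable def pnjglObj {K p : ℕ} (q : ℝ≥0∞) (n : Fin K → ℝ)
    (lam₁ lam₂ : ℝ) (S : Fin K → Matrix (Fin p) (Fin p) ℝ)
    (Θ : Fin K → Matrix (Fin p) (Fin p) ℝ) : ℝ :=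
  (∑ k : Fin K, n k * (-Real.log (Θ k).det + (S k * Θ k).trace))
    + lam₁ * (∑ k : Fin K, ∑ i : Fin p, ∑ j : Fin p, |Θ k i j|)
    + lam₂ * ∑ k : Fin K, ∑ k' : Fin K,
        (if k < k' then rcon1 q (Θ k - Θ k') else 0)

namespace PNJGLAux

variable {p L : ℕ}

def bproj (b : Fin p → Fin L) (M : Matrix (Fin p) (Fin p) ℝ) :
    Matrix (Fin p) (Fin p) ℝ :=
  Matrix.of fun i j => if b i = b j then M i j else 0

lemma bproj_apply (b : Fin p → Fin L) (M : Matrix (Fin p) (Fin p) ℝ) (i j : Fin p) :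
    bproj b M i j = if b i = b j then M i j else 0 := rfl

lemma bproj_transpose (b : Fin p → Fin L) (M : Matrix (Fin p) (Fin p) ℝ) :
    (bproj b M)ᵀ = bproj b Mᵀ := by
  ext i j
  simp only [transpose_apply, bproj_apply]
  exact if_congr eq_comm rfl rfl

lemma bproj_add (b : Fin p → Fin L) (M N : Matrix (Fin p) (Fin p) ℝ) :
    bproj b (M + N) = bproj b M + bproj b N := by
  ext i j
  simp only [bproj_apply, Matrix.add_apply]
  split <;> simp

lemma bproj_sub (b : Fin p → Fin L) (M N : Matrix (Fin p) (Fin p) ℝ) :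
    bproj b (M - N) = bproj b M - bproj b N := by
  ext i j
  simp only [bproj_apply, Matrix.sub_apply]
  split <;> simp

lemma conjT_eq_transpose (M : Matrix (Fin p) (Fin p) ℝ) : Mᴴ = Mᵀ := by
  ext i j; simp [conjTranspose_apply]

lemma bproj_isHermitian (b : Fin p → Fin L) {M : Matrix (Fin p) (Fin p) ℝ}
    (hM : M.IsHermitian) : (bproj b M).IsHermitian := by
  have hMt : Mᵀ = M := by rw [← conjT_eq_transpose]; exact hM
  unfold Matrix.IsHermitian
  rw [conjT_eq_transpose, bproj_transpose, hMt]

lemma bproj_posDef (b : Fin p → Fin L) {M : Matrix (Fin p) (Fin p) ℝ}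
    (hM : M.PosDef) : (bproj b M).PosDef := by
  refine PosDef.of_dotProduct_mulVec_pos (bproj_isHermitian b hM.1) ?_
  intro x hx
  classical
  set y : Fin L → (Fin p → ℝ) := fun l i => if b i = l then x i else 0 with hy
  have key : dotProduct (star x) ((bproj b M) *ᵥ x)
      = ∑ l : Fin L, dotProduct (star (y l)) (M *ᵥ (y l)) := by
    unfold dotProduct Matrix.mulVec
    unfold dotProduct
    simp only [Pi.star_apply, star_trivial, hy]
    simp only [Finset.mul_sum]
    have swap : ∀ (f : Fin L → Fin p → ℝ), ∑ l : Fin L, ∑ i : Fin p, f l i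
        = ∑ i : Fin p, ∑ l : Fin L, f l i := fun f => Finset.sum_comm
    rw [swap]
    refine Finset.sum_congr rfl fun i _ => ?_
    rw [swap fun l j => (if b i = l then x i else 0) * (M i j * if b j = l then x j else 0)]
    refine Finset.sum_congr rfl fun j _ => ?_
    by_cases h : b i = b j
    · rw [Finset.sum_eq_single (b i)]
      · rw [bproj_apply, if_pos h, if_pos h.symm, if_pos (by trivial : b i = b i)]
      · intro l _ hl
        rw [if_neg (fun hh : b i = l => hl hh.symm), zero_mul]
      · intro h'; exact absurd (Finset.mem_univ _) h'
    · rw [bproj_apply, if_neg h, zero_mul, mul_zero, Finset.sum_eq_zero]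
      intro l _
      by_cases h1 : b i = l
      · have h2 : ¬ b j = l := fun hh => h (h1.trans hh.symm)
        rw [if_neg h2, mul_zero, mul_zero]
      · rw [if_neg h1, zero_mul]
  rw [key]
  obtain ⟨i0, hi0⟩ : ∃ i, x i ≠ 0 := Function.ne_iff.mp hx
  refine Finset.sum_pos' (fun l _ => hM.posSemidef.dotProduct_mulVec_nonneg _) ⟨b i0, Finset.mem_univ _, ?_⟩
  refine hM.dotProduct_mulVec_pos (fun h => hi0 ?_)
  have := congrFun h i0
  simpa [hy] using this


lemma trace_mul_apply {m : ℕ} (A B : Matrix (Fin m) (Fin m) ℝ) :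
    (A * B).trace = ∑ i : Fin m, ∑ j : Fin m, A i j * B j i := by
  simp [Matrix.trace, Matrix.diag, Matrix.mul_apply]

lemma bproj_inv_apply (b : Fin p → Fin L) {M : Matrix (Fin p) (Fin p) ℝ}
    (hu : IsUnit M.det) (h : ∀ i j, b i ≠ b j → M i j = 0) :
    ∀ i j, b i ≠ b j → M⁻¹ i j = 0 := by
  classical
  set d : Fin p → ℝ := fun i => ((b i : ℕ) : ℝ) with hd
  have hdinj : ∀ i j, b i ≠ b j → d i ≠ d j := by
    intro i j hij hde
    exact hij (Fin.ext (Nat.cast_injective hde))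
  set D : Matrix (Fin p) (Fin p) ℝ := Matrix.diagonal d with hD
  have hcomm : M * D = D * M := by
    ext i j
    rw [hD, Matrix.mul_diagonal, Matrix.diagonal_mul]
    by_cases hb : b i = b j
    · have : d i = d j := by rw [hd]; simp [hb]
      rw [this]; ring
    · rw [h i j hb]; ring
  have hcomm' : M⁻¹ * D = D * M⁻¹ := by
    calc M⁻¹ * D = M⁻¹ * D * (M * M⁻¹) := by
          rw [Matrix.mul_nonsing_inv _ hu, mul_one]
      _ = M⁻¹ * (D * M) * M⁻¹ := by
          simp only [Matrix.mul_assoc]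
      _ = M⁻¹ * (M * D) * M⁻¹ := by rw [← hcomm]
      _ = (M⁻¹ * M) * (D * M⁻¹) := by simp only [Matrix.mul_assoc]
      _ = D * M⁻¹ := by rw [Matrix.nonsing_inv_mul _ hu, one_mul]
  intro i j hij
  have hent := congrFun (congrFun hcomm' i) j
  rw [hD, Matrix.mul_diagonal, Matrix.diagonal_mul] at hent
  have h2 : M⁻¹ i j * (d j - d i) = 0 := by rw [mul_sub]; rw [hent]; ring
  rcases mul_eq_zero.mp h2 with h3 | h3
  · exact h3
  · exact absurd (by linarith [sub_eq_zero.mp h3] : d j = d i)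
      (Ne.symm (hdinj i j hij))


open scoped MatrixOrder in
lemma log_det_lt {m : ℕ} {A B : Matrix (Fin m) (Fin m) ℝ} (hA : A.PosDef) (hB : B.PosDef)
    (hne : B ≠ A) :
    Real.log B.det < Real.log A.det + (A⁻¹ * (B - A)).trace := by
  classical
  set R : Matrix (Fin m) (Fin m) ℝ := CFC.sqrt A with hRdef
  have hR2 : R * R = A := CFC.sqrt_mul_sqrt_self A hA.posSemidef.nonneg
  have hRsym : R.IsHermitian := (CFC.sqrt_nonneg A).posSemidef.1
  have hdetR : R.det * R.det = A.det := by rw [← Matrix.det_mul, hR2]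
  have hdetRne : R.det ≠ 0 := by
    intro h
    rw [h, mul_zero] at hdetR
    exact hA.det_pos.ne' hdetR.symm
  have huR : IsUnit R.det := isUnit_iff_ne_zero.mpr hdetRne
  set C : Matrix (Fin m) (Fin m) ℝ := R⁻¹ * B * R⁻¹ with hCdef
  have hCps : C.PosSemidef := by
    have h1 := hB.posSemidef.conjTranspose_mul_mul_same (R⁻¹)
    rwa [hRsym.inv] at h1
  have hBC : R * C * R = B := by
    calc R * (R⁻¹ * B * R⁻¹) * R = (R * R⁻¹) * B * (R⁻¹ * R) := by
          simp only [Matrix.mul_assoc]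
      _ = B := by
          rw [Matrix.mul_nonsing_inv _ huR, Matrix.nonsing_inv_mul _ huR, one_mul, mul_one]
  have hdetB : B.det = A.det * C.det := by
    rw [← hBC, Matrix.det_mul, Matrix.det_mul, ← hdetR]; ring
  have hdetCpos : 0 < C.det := by
    have h1 := hB.det_pos
    have h2 := hA.det_pos
    nlinarith [hdetB]
  set μ : Fin m → ℝ := hCps.1.eigenvalues with hμ
  have hμnonneg : ∀ i, 0 ≤ μ i := fun i => hCps.eigenvalues_nonneg i
  have hdetC : C.det = ∏ i, μ i := by
    have := hCps.1.det_eq_prod_eigenvalues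
    simpa using this
  have hμpos : ∀ i, 0 < μ i := by
    intro i
    rcases lt_or_eq_of_le (hμnonneg i) with h | h
    · exact h
    · exfalso
      rw [hdetC] at hdetCpos
      exact absurd (Finset.prod_eq_zero (Finset.mem_univ i) h.symm) hdetCpos.ne'
  set U : Matrix (Fin m) (Fin m) ℝ := (Matrix.IsHermitian.eigenvectorUnitary hCps.1 : Matrix (Fin m) (Fin m) ℝ) with hU
  have hUU : star U * U = 1 :=
    (Matrix.mem_unitaryGroup_iff').mp (Matrix.IsHermitian.eigenvectorUnitary hCps.1).2
  have hst : C = U * Matrix.diagonal (RCLike.ofReal ∘ μ) * star U := hCps.1.spectral_theorem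
  have htrC : C.trace = ∑ i, μ i := by
    rw [hst, Matrix.trace_mul_cycle, hUU, one_mul, Matrix.trace_diagonal]
    simp
  have hCne1 : C ≠ 1 := by
    intro h
    apply hne
    rw [← hBC, h, mul_one, hR2]
  have hexist : ∃ i, μ i ≠ 1 := by
    by_contra hall
    push_neg at hall
    apply hCne1
    rw [hst]
    have : Matrix.diagonal (RCLike.ofReal ∘ μ) = (1 : Matrix (Fin m) (Fin m) ℝ) := by
      have h9 : (RCLike.ofReal ∘ μ : Fin m → ℝ) = fun _ => 1 := by
        funext i; simp [hall i]
      rw [h9]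
      exact Matrix.diagonal_one
    rw [this, mul_one]
    have := (Matrix.mem_unitaryGroup_iff).mp (Matrix.IsHermitian.eigenvectorUnitary hCps.1).2
    exact this
  have hAinv : A⁻¹ = R⁻¹ * R⁻¹ := by rw [← hR2, Matrix.mul_inv_rev]
  have htrace : (A⁻¹ * (B - A)).trace = C.trace - (m : ℝ) := by
    rw [mul_sub, Matrix.trace_sub]
    have h1 : A⁻¹ * A = 1 := Matrix.nonsing_inv_mul _ (isUnit_iff_ne_zero.mpr hA.det_pos.ne')
    have h2 : (A⁻¹ * B).trace = C.trace := by
      rw [hAinv, hCdef, Matrix.trace_mul_cycle, Matrix.trace_mul_cycle]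
    rw [h1, h2, Matrix.trace_one]
    simp
  have hlogC : Real.log C.det = ∑ i, Real.log (μ i) := by
    rw [hdetC]
    exact Real.log_prod (fun i _ => (hμpos i).ne')
  have hsumlt : ∑ i, Real.log (μ i) < ∑ i, (μ i - 1) := by
    obtain ⟨i0, hi0⟩ := hexist
    refine Finset.sum_lt_sum (fun i _ => Real.log_le_sub_one_of_pos (hμpos i)) ⟨i0, Finset.mem_univ _, ?_⟩
    exact Real.log_lt_sub_one_of_pos (hμpos i0) hi0
  have hsum : ∑ i, (μ i - 1) = C.trace - (m : ℝ) := by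
    rw [htrC, Finset.sum_sub_distrib]
    simp
  have hlogB : Real.log B.det = Real.log A.det + Real.log C.det := by
    rw [hdetB, Real.log_mul hA.det_pos.ne' hdetCpos.ne']
  rw [hlogB, htrace]
  have := hsumlt
  rw [hsum] at this
  rw [hlogC]
  linarith


lemma lqNorm_nonneg {q : ℝ≥0∞} (hq : 1 ≤ q) {ι : Type*} [Fintype ι] (x : ι → ℝ) :
    0 ≤ lqNorm q x := by
  unfold lqNorm
  by_cases hq' : q = ∞
  · subst hq'
    rw [PiLp.norm_eq_ciSup]
    exact Real.iSup_nonneg fun i => norm_nonneg _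
  · have ht : 0 < q.toReal :=
      ENNReal.toReal_pos (fun h0 => by rw [h0] at hq; simp at hq) hq'
    rw [PiLp.norm_eq_sum ht]
    positivity

lemma lqNorm_mono {q : ℝ≥0∞} (hq : 1 ≤ q) {ι : Type*} [Fintype ι] {x y : ι → ℝ}
    (h : ∀ i, |x i| ≤ |y i|) : lqNorm q x ≤ lqNorm q y := by
  unfold lqNorm
  by_cases hq' : q = ∞
  · subst hq'
    rw [PiLp.norm_eq_ciSup, PiLp.norm_eq_ciSup]
    cases isEmpty_or_nonempty ι with
    | inl hE => simp [Real.iSup_of_isEmpty]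
    | inr hN =>
      apply ciSup_mono (Set.Finite.bddAbove (Set.finite_range _))
      intro i
      simp only [WithLp.equiv_symm_apply, PiLp.toLp_apply, Real.norm_eq_abs]
      exact h i
  · have ht : 0 < q.toReal :=
      ENNReal.toReal_pos (fun h0 => by rw [h0] at hq; simp at hq) hq'
    rw [PiLp.norm_eq_sum ht, PiLp.norm_eq_sum ht]
    refine Real.rpow_le_rpow (Finset.sum_nonneg fun i _ => ?_) (Finset.sum_le_sum fun i _ => ?_) (by positivity)
    · exact Real.rpow_nonneg (norm_nonneg _) _
    · refine Real.rpow_le_rpow (norm_nonneg _) ?_ ht.le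
      simpa [WithLp.equiv_symm_apply, PiLp.toLp_apply, Real.norm_eq_abs] using h i

lemma rcon1_bproj_le {q : ℝ≥0∞} (hq : 1 ≤ q) (b : Fin p → Fin L)
    {M : Matrix (Fin p) (Fin p) ℝ} (hM : Mᵀ = M) :
    rcon1 q (bproj b M) ≤ rcon1 q M := by
  unfold rcon1
  have hbdd : ∀ N : Matrix (Fin p) (Fin p) ℝ, BddBelow {r : ℝ | ∃ V : Matrix (Fin p) (Fin p) ℝ,
      N = V + Vᵀ ∧ r = ∑ j : Fin p, lqNorm q (fun i => V i j)} := by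
    intro N
    refine ⟨0, ?_⟩
    rintro r ⟨W, _, rfl⟩
    exact Finset.sum_nonneg fun j _ => lqNorm_nonneg hq _
  apply le_csInf
  · refine ⟨_, ⟨(1/2 : ℝ) • M, ?_, rfl⟩⟩
    ext i j
    have hsym := congrFun (congrFun hM i) j
    simp only [Matrix.transpose_apply] at hsym
    simp only [Matrix.add_apply, Matrix.transpose_apply, Matrix.smul_apply, smul_eq_mul]
    rw [hsym]
    ring
  · rintro r ⟨V, hV, rfl⟩
    have hmem : (∑ j : Fin p, lqNorm q (fun i => (bproj b V) i j)) ∈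
        {r : ℝ | ∃ W : Matrix (Fin p) (Fin p) ℝ,
          bproj b M = W + Wᵀ ∧ r = ∑ j : Fin p, lqNorm q (fun i => W i j)} := by
      refine ⟨bproj b V, ?_, rfl⟩
      rw [hV, bproj_add, bproj_transpose]
    refine le_trans (csInf_le (hbdd _) hmem) ?_
    refine Finset.sum_le_sum fun j _ => ?_
    refine lqNorm_mono hq fun i => ?_
    rw [bproj_apply]
    split
    · exact le_refl _
    · simpa using abs_nonneg _


lemma traceabs_le (b : Fin p → Fin L) (S M : Matrix (Fin p) (Fin p) ℝ) {nk lam₁ : ℝ}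
    (hnk : 0 ≤ nk) (hc : ∀ i j, b i ≠ b j → nk * |S i j| ≤ lam₁) :
    nk * (S * bproj b M).trace + lam₁ * (∑ i : Fin p, ∑ j : Fin p, |bproj b M i j|)
      ≤ nk * (S * M).trace + lam₁ * (∑ i : Fin p, ∑ j : Fin p, |M i j|) := by
  have habs : ∀ N : Matrix (Fin p) (Fin p) ℝ,
      (∑ i : Fin p, ∑ j : Fin p, |N i j|) = ∑ i : Fin p, ∑ j : Fin p, |N j i| :=
    fun N => Finset.sum_comm
  have key : ∀ i j : Fin p, nk * (S i j * bproj b M j i) + lam₁ * |bproj b M j i|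
      ≤ nk * (S i j * M j i) + lam₁ * |M j i| := by
    intro i j
    rw [bproj_apply]
    by_cases h : b j = b i
    · rw [if_pos h]
    · rw [if_neg h]
      have h2 : nk * |S i j| ≤ lam₁ := hc i j (fun hh => h hh.symm)
      have h3 : -(nk * (S i j * M j i)) ≤ nk * (|S i j| * |M j i|) := by
        have h5 : -(S i j * M j i) ≤ |S i j * M j i| := neg_le_abs _
        rw [abs_mul] at h5
        nlinarith
      have h4 : nk * |S i j| * |M j i| ≤ lam₁ * |M j i| :=
        mul_le_mul_of_nonneg_right h2 (abs_nonneg _)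
      simp only [mul_zero, abs_zero]
      nlinarith
  calc nk * (S * bproj b M).trace + lam₁ * (∑ i : Fin p, ∑ j : Fin p, |bproj b M i j|)
      = ∑ i : Fin p, ∑ j : Fin p,
          (nk * (S i j * bproj b M j i) + lam₁ * |bproj b M j i|) := by
        rw [trace_mul_apply, habs (bproj b M), Finset.mul_sum, Finset.mul_sum,
          ← Finset.sum_add_distrib]
        refine Finset.sum_congr rfl fun i _ => ?_
        rw [Finset.mul_sum, Finset.mul_sum, ← Finset.sum_add_distrib]
    _ ≤ ∑ i : Fin p, ∑ j : Fin p, (nk * (S i j * M j i) + lam₁ * |M j i|) :=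
        Finset.sum_le_sum fun i _ => Finset.sum_le_sum fun j _ => key i j
    _ = nk * (S * M).trace + lam₁ * (∑ i : Fin p, ∑ j : Fin p, |M i j|) := by
        rw [trace_mul_apply, habs M, Finset.mul_sum, Finset.mul_sum,
          ← Finset.sum_add_distrib]
        refine Finset.sum_congr rfl fun i _ => ?_
        rw [Finset.mul_sum, Finset.mul_sum, ← Finset.sum_add_distrib]

end PNJGLAux

/-- Theorem 3, sufficient condition for PNJGL: if
n_k|Sᵏ_{ij}| ≤ λ₁ for all (i,j) ∈ T^c and all k, where T = ∪_l I_l × I_l for a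
partition (I_l), then every K-tuple of symmetric positive definite matrices
minimizing the PNJGL objective is supported on T. -/

theorem pnjgl_sufficient (K p L : ℕ) (hK : 2 ≤ K) (q : ℝ≥0∞) (hq : 1 ≤ q)
    (n : Fin K → ℝ) (hn : ∀ k, 0 < n k)
    (lam₁ lam₂ : ℝ) (hlam₁ : 0 ≤ lam₁) (hlam₂ : 0 ≤ lam₂)
    (S : Fin K → Matrix (Fin p) (Fin p) ℝ) (hS : ∀ k, (S k).IsSymm)
    (I : Fin L → Finset (Fin p)) (hpart : ∀ i : Fin p, ∃! l, i ∈ I l)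
    (hcond : ∀ k, ∀ i j : Fin p, ¬ (∃ l, i ∈ I l ∧ j ∈ I l) →
      n k * |S k i j| ≤ lam₁)
    (Θ : Fin K → Matrix (Fin p) (Fin p) ℝ) (hΘ : ∀ k, (Θ k).PosDef)
    (hmin : ∀ Ψ : Fin K → Matrix (Fin p) (Fin p) ℝ, (∀ k, (Ψ k).PosDef) →
      pnjglObj q n lam₁ lam₂ S Θ ≤ pnjglObj q n lam₁ lam₂ S Ψ) :
    ∀ k, ∀ i j : Fin p, ¬ (∃ l, i ∈ I l ∧ j ∈ I l) → Θ k i j = 0 := by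
  classical
  intro k0 i0 j0 hnot
  by_contra hne0
  set b : Fin p → Fin L := fun i => (hpart i).choose with hb
  have hbmem : ∀ i, i ∈ I (b i) := fun i => (hpart i).choose_spec.1
  have hbuniq : ∀ i l, i ∈ I l → l = b i := fun i l hl => (hpart i).choose_spec.2 l hl
  have hbiff : ∀ i j : Fin p, (∃ l, i ∈ I l ∧ j ∈ I l) ↔ b i = b j := by
    intro i j
    constructor
    · rintro ⟨l, hi, hj⟩
      rw [← hbuniq i l hi, ← hbuniq j l hj]
    · intro h
      exact ⟨b i, hbmem i, h ▸ hbmem j⟩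
  have hbne : ∀ i j : Fin p, ¬(∃ l, i ∈ I l ∧ j ∈ I l) → b i ≠ b j := fun i j h he =>
    h ((hbiff i j).mpr he)
  set Ψ : Fin K → Matrix (Fin p) (Fin p) ℝ := fun k => PNJGLAux.bproj b (Θ k) with hΨdef
  have hΨpd : ∀ k, (Ψ k).PosDef := fun k => PNJGLAux.bproj_posDef b (hΘ k)
  have hΨ0 : ∀ k i j, b i ≠ b j → Ψ k i j = 0 := by
    intro k i j h
    show (if b i = b j then Θ k i j else 0) = 0
    exact if_neg h
  have htr0 : ∀ k, ((Ψ k)⁻¹ * (Θ k - Ψ k)).trace = 0 := by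
    intro k
    rw [PNJGLAux.trace_mul_apply, Finset.sum_eq_zero]
    intro i _
    rw [Finset.sum_eq_zero]
    intro j _
    by_cases h : b i = b j
    · have hz : (Θ k - Ψ k) j i = 0 := by
        simp only [Matrix.sub_apply]
        have : Ψ k j i = Θ k j i := by
          show (if b j = b i then Θ k j i else 0) = Θ k j i
          rw [if_pos h.symm]
        rw [this]; ring
      rw [hz, mul_zero]
    · have hz : (Ψ k)⁻¹ i j = 0 := by
        refine PNJGLAux.bproj_inv_apply b
          (isUnit_iff_ne_zero.mpr (hΨpd k).det_pos.ne') ?_ i j h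
        intro i' j' h'
        exact hΨ0 k i' j' h'
      rw [hz, zero_mul]
  have hld : ∀ k, Real.log (Θ k).det ≤ Real.log (Ψ k).det := by
    intro k
    by_cases h : Θ k = Ψ k
    · rw [h]
    · have h2 := PNJGLAux.log_det_lt (hΨpd k) (hΘ k) h
      rw [htr0 k] at h2
      linarith
  have hldk0 : Real.log (Θ k0).det < Real.log (Ψ k0).det := by
    have hne : Θ k0 ≠ Ψ k0 := by
      intro h
      apply hne0
      have h1 := congrFun (congrFun h i0) j0
      rw [h1]
      exact hΨ0 k0 i0 j0 (hbne i0 j0 hnot)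
    have h2 := PNJGLAux.log_det_lt (hΨpd k0) (hΘ k0) hne
    rw [htr0 k0] at h2
    linarith
  have hta : ∀ k, n k * (S k * Ψ k).trace + lam₁ * (∑ i : Fin p, ∑ j : Fin p, |Ψ k i j|)
      ≤ n k * (S k * Θ k).trace + lam₁ * (∑ i : Fin p, ∑ j : Fin p, |Θ k i j|) := by
    intro k
    exact PNJGLAux.traceabs_le b (S k) (Θ k) (hn k).le
      (fun i j h => hcond k i j (fun he => h ((hbiff i j).mp he)))
  have hper : ∀ k, n k * (-Real.log (Ψ k).det + (S k * Ψ k).trace)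
        + lam₁ * (∑ i : Fin p, ∑ j : Fin p, |Ψ k i j|)
      ≤ n k * (-Real.log (Θ k).det + (S k * Θ k).trace)
        + lam₁ * (∑ i : Fin p, ∑ j : Fin p, |Θ k i j|) := by
    intro k
    have h1 := mul_le_mul_of_nonneg_left (neg_le_neg (hld k)) (hn k).le
    have h2 := hta k
    nlinarith [h1, h2]
  have hperk0 : n k0 * (-Real.log (Ψ k0).det + (S k0 * Ψ k0).trace)
        + lam₁ * (∑ i : Fin p, ∑ j : Fin p, |Ψ k0 i j|)
      < n k0 * (-Real.log (Θ k0).det + (S k0 * Θ k0).trace)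
        + lam₁ * (∑ i : Fin p, ∑ j : Fin p, |Θ k0 i j|) := by
    have h1 := mul_lt_mul_of_pos_left (neg_lt_neg hldk0) (hn k0)
    have h2 := hta k0
    nlinarith [h1, h2]
  have h12 : (∑ k : Fin K, n k * (-Real.log (Ψ k).det + (S k * Ψ k).trace))
        + lam₁ * (∑ k : Fin K, ∑ i : Fin p, ∑ j : Fin p, |Ψ k i j|)
      < (∑ k : Fin K, n k * (-Real.log (Θ k).det + (S k * Θ k).trace))
        + lam₁ * (∑ k : Fin K, ∑ i : Fin p, ∑ j : Fin p, |Θ k i j|) := by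
    rw [Finset.mul_sum, Finset.mul_sum, ← Finset.sum_add_distrib, ← Finset.sum_add_distrib]
    exact Finset.sum_lt_sum (fun k _ => hper k) ⟨k0, Finset.mem_univ _, hperk0⟩
  have h3 : (∑ k : Fin K, ∑ k' : Fin K, (if k < k' then rcon1 q (Ψ k - Ψ k') else 0))
      ≤ ∑ k : Fin K, ∑ k' : Fin K, (if k < k' then rcon1 q (Θ k - Θ k') else 0) := by
    refine Finset.sum_le_sum fun k _ => Finset.sum_le_sum fun k' _ => ?_
    by_cases h : k < k'
    · rw [if_pos h, if_pos h]
      have hdiff : Ψ k - Ψ k' = PNJGLAux.bproj b (Θ k - Θ k') :=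
        (PNJGLAux.bproj_sub b _ _).symm
      rw [hdiff]
      apply PNJGLAux.rcon1_bproj_le hq b
      rw [Matrix.transpose_sub]
      have hk : (Θ k)ᵀ = Θ k := by
        rw [← PNJGLAux.conjT_eq_transpose]; exact (hΘ k).1
      have hk' : (Θ k')ᵀ = Θ k' := by
        rw [← PNJGLAux.conjT_eq_transpose]; exact (hΘ k').1
      rw [hk, hk']
    · rw [if_neg h, if_neg h]
  have hlt : pnjglObj q n lam₁ lam₂ S Ψ < pnjglObj q n lam₁ lam₂ S Θ := by
    unfold pnjglObj
    have h4 := mul_le_mul_of_nonneg_left h3 hlam₂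
    linarith
  exact absurd (hmin Ψ hΨpd) (not_le.mpr hlt)
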